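/- The subgroup Γ⁰(3) = {(a b; c d) ∈ SL₂(ℤ) : b ≡ 0 (mod 3)} of SL₂(ℤ) is generated by the two matrices (1 0; −1 1) and (2 3; −1 −1). -/

import Mathlib

open Matrix

noncomputable section

/-- The matrix `(1 0; −1 1)` as an element of `SL₂(ℤ)`. -/
def g₁ : Matrix.SpecialLinearGroup (Fin 2) ℤ :=
  ⟨!![1, 0; -1, 1], by norm_num [Matrix.det_fin_two_of]⟩

/-- The matrix `(2 3; −1 −1)` as an element of `SL₂(ℤ)`. -/
def g₂ : Matrix.SpecialLinearGroup (Fin 2) ℤ :=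
  ⟨!![2, 3; -1, -1], by norm_num [Matrix.det_fin_two_of]⟩

namespace GammaUpperAux

abbrev SL2 := Matrix.SpecialLinearGroup (Fin 2) ℤ

def L (n : ℤ) : SL2 := ⟨!![1, 0; -n, 1], by simp [Matrix.det_fin_two_of]⟩
def T (n : ℤ) : SL2 := ⟨!![1, 3*n; 0, 1], by simp [Matrix.det_fin_two_of]⟩

abbrev H : Subgroup SL2 := Subgroup.closure ({g₁, g₂} : Set SL2)

lemma hg₁ : g₁ ∈ H := Subgroup.subset_closure (by simp)
lemma hg₂ : g₂ ∈ H := Subgroup.subset_closure (by simp)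

lemma L_mul' (m n : ℤ) : L m * L n = L (m + n) := by
  apply Subtype.ext; simp only [Matrix.SpecialLinearGroup.coe_mul]; simp [L, Matrix.mul_fin_two]; ring_nf

lemma T_mul' (m n : ℤ) : T m * T n = T (m + n) := by
  apply Subtype.ext; simp only [Matrix.SpecialLinearGroup.coe_mul]; simp [T, Matrix.mul_fin_two]; ring_nf

lemma L_zero : L 0 = 1 := by
  apply Subtype.ext; simp [L, Matrix.one_fin_two]

lemma T_zero : T 0 = 1 := by
  apply Subtype.ext; simp [T, Matrix.one_fin_two]

lemma L_inv (n : ℤ) : (L n)⁻¹ = L (-n) := by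
  apply inv_eq_of_mul_eq_one_right; rw [L_mul']; simp [L_zero]

lemma T_inv (n : ℤ) : (T n)⁻¹ = T (-n) := by
  apply inv_eq_of_mul_eq_one_right; rw [T_mul']; simp [T_zero]

lemma L_one : L 1 = g₁ := by apply Subtype.ext; simp [L, g₁]

lemma T_one_mem : T 1 ∈ H := by
  have h : T 1 = g₂ * g₂ * g₂ * g₁⁻¹ * g₂⁻¹ := by
    rw [eq_mul_inv_iff_mul_eq, eq_mul_inv_iff_mul_eq]
    apply Subtype.ext
    simp only [Matrix.SpecialLinearGroup.coe_mul]; simp [T, g₁, g₂, Matrix.mul_fin_two]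
  rw [h]
  exact mul_mem (mul_mem (mul_mem (mul_mem hg₂ hg₂) hg₂) (inv_mem hg₁)) (inv_mem hg₂)

lemma L_mem (n : ℤ) : L n ∈ H := by
  induction n using Int.induction_on with
  | zero => rw [L_zero]; exact one_mem _
  | succ k ih => rw [← L_mul']; exact mul_mem ih (L_one ▸ hg₁)
  | pred k ih => rw [show (-(k:ℤ) - 1) = -k + -1 by ring, ← L_mul']
                 exact mul_mem ih (by rw [← L_inv]; exact inv_mem (L_one ▸ hg₁))

lemma T_mem (n : ℤ) : T n ∈ H := by
  induction n using Int.induction_on with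
  | zero => rw [T_zero]; exact one_mem _
  | succ k ih => rw [← T_mul']; exact mul_mem ih T_one_mem
  | pred k ih => rw [show (-(k:ℤ) - 1) = -k + -1 by ring, ← T_mul']
                 exact mul_mem ih (by rw [← T_inv]; exact inv_mem T_one_mem)

lemma neg_one_mem : (-1 : SL2) ∈ H := by
  have h : (-1 : SL2) = g₂ * g₂ * g₂ := by
    apply Subtype.ext
    simp only [Matrix.SpecialLinearGroup.coe_mul]; simp [g₂, Matrix.mul_fin_two, Matrix.one_fin_two]
  rw [h]; exact mul_mem (mul_mem hg₂ hg₂) hg₂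

-- entry lemmas
lemma Lmul00 (n : ℤ) (X : SL2) : ((L n * X : SL2) : Matrix (Fin 2) (Fin 2) ℤ) 0 0 = (X : Matrix (Fin 2) (Fin 2) ℤ) 0 0 := by
  simp only [Matrix.SpecialLinearGroup.coe_mul]; simp [L, Matrix.mul_apply, Fin.sum_univ_two]
lemma Lmul01 (n : ℤ) (X : SL2) : ((L n * X : SL2) : Matrix (Fin 2) (Fin 2) ℤ) 0 1 = (X : Matrix (Fin 2) (Fin 2) ℤ) 0 1 := by
  simp only [Matrix.SpecialLinearGroup.coe_mul]; simp [L, Matrix.mul_apply, Fin.sum_univ_two]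
lemma Lmul10 (n : ℤ) (X : SL2) : ((L n * X : SL2) : Matrix (Fin 2) (Fin 2) ℤ) 1 0 = (X : Matrix (Fin 2) (Fin 2) ℤ) 1 0 - n * (X : Matrix (Fin 2) (Fin 2) ℤ) 0 0 := by
  simp only [Matrix.SpecialLinearGroup.coe_mul]; simp [L, Matrix.mul_apply, Fin.sum_univ_two]; ring
lemma Tmul00 (m : ℤ) (X : SL2) : ((T m * X : SL2) : Matrix (Fin 2) (Fin 2) ℤ) 0 0 = (X : Matrix (Fin 2) (Fin 2) ℤ) 0 0 + 3 * m * (X : Matrix (Fin 2) (Fin 2) ℤ) 1 0 := by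
  simp only [Matrix.SpecialLinearGroup.coe_mul]; simp [T, Matrix.mul_apply, Fin.sum_univ_two]
lemma Tmul01 (m : ℤ) (X : SL2) : ((T m * X : SL2) : Matrix (Fin 2) (Fin 2) ℤ) 0 1 = (X : Matrix (Fin 2) (Fin 2) ℤ) 0 1 + 3 * m * (X : Matrix (Fin 2) (Fin 2) ℤ) 1 1 := by
  simp only [Matrix.SpecialLinearGroup.coe_mul]; simp [T, Matrix.mul_apply, Fin.sum_univ_two]

lemma det_entries (A : SL2) :
    (A : Matrix (Fin 2) (Fin 2) ℤ) 0 0 * (A : Matrix (Fin 2) (Fin 2) ℤ) 1 1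
      - (A : Matrix (Fin 2) (Fin 2) ℤ) 0 1 * (A : Matrix (Fin 2) (Fin 2) ℤ) 1 0 = 1 := by
  have := A.2; rwa [Matrix.det_fin_two] at this

lemma tri_mem (A : SL2) (hc : (A : Matrix (Fin 2) (Fin 2) ℤ) 1 0 = 0)
    (hb : (3:ℤ) ∣ (A : Matrix (Fin 2) (Fin 2) ℤ) 0 1) : A ∈ H := by
  have hdet := det_entries A
  rw [hc, mul_zero, sub_zero] at hdet
  obtain ⟨k, hk⟩ := hb
  rcases Int.mul_eq_one_iff_eq_one_or_neg_one.mp hdet with ⟨h1, h2⟩ | ⟨h1, h2⟩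
  · have hA : A = T k := by
      apply Subtype.ext
      rw [Matrix.eta_fin_two (A : Matrix (Fin 2) (Fin 2) ℤ), h1, h2, hc, hk]
      rfl
    rw [hA]; exact T_mem k
  · have hA : A = (-1) * T (-k) := by
      apply Subtype.ext
      have : ((-1 * T (-k) : SL2) : Matrix (Fin 2) (Fin 2) ℤ) = !![-1, 3*k; 0, -1] := by
        show (-1 : Matrix (Fin 2) (Fin 2) ℤ) * (T (-k) : Matrix (Fin 2) (Fin 2) ℤ) = _
        simp [T, Matrix.mul_fin_two, Matrix.one_fin_two]
      rw [this, Matrix.eta_fin_two (A : Matrix (Fin 2) (Fin 2) ℤ), h1, h2, hc, hk]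
    rw [hA]; exact mul_mem neg_one_mem (T_mem (-k))

lemma bmod_bound (x : ℤ) (m : ℕ) (hm : 0 < m) : 2 * (Int.bmod x m).natAbs ≤ m := by
  have h1 := Int.le_bmod (x := x) hm
  have h2 := Int.bmod_le (x := x) hm
  omega

lemma main_mem : ∀ N : ℕ, ∀ A : SL2, ((A : Matrix (Fin 2) (Fin 2) ℤ) 0 0).natAbs ≤ N →
    (3:ℤ) ∣ (A : Matrix (Fin 2) (Fin 2) ℤ) 0 1 → A ∈ H := by
  intro N
  induction N using Nat.strong_induction_on with
  | _ N ih =>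
  intro A hN hb
  have hdet := det_entries A
  have ha3 : ¬ (3:ℤ) ∣ (A : Matrix (Fin 2) (Fin 2) ℤ) 0 0 := fun h =>
    absurd (hdet ▸ dvd_sub (h.mul_right _) (hb.mul_right _)) (by norm_num)
  have ha0 : (A : Matrix (Fin 2) (Fin 2) ℤ) 0 0 ≠ 0 := fun h => ha3 (by rw [h]; exact dvd_zero 3)
  by_cases hc : (A : Matrix (Fin 2) (Fin 2) ℤ) 1 0 = 0
  · exact tri_mem A hc hb
  · set a : ℤ := (A : Matrix (Fin 2) (Fin 2) ℤ) 0 0 with ha_def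
    set c : ℤ := (A : Matrix (Fin 2) (Fin 2) ℤ) 1 0 with hc_def
    set c1 : ℤ := Int.bmod c a.natAbs with hc1_def
    have hdvd : a ∣ c1 - c := Int.natAbs_dvd.mp Int.dvd_bmod_sub_self
    set n : ℤ := -((c1 - c) / a) with hn_def
    have hnc : c - n * a = c1 := by
      have h := Int.ediv_mul_cancel hdvd
      rw [hn_def]; linarith
    have hcb : 2 * c1.natAbs ≤ a.natAbs := bmod_bound c a.natAbs (Int.natAbs_pos.mpr ha0)
    have e00 : ((L n * A : SL2) : Matrix (Fin 2) (Fin 2) ℤ) 0 0 = a := Lmul00 n A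
    have e01 : ((L n * A : SL2) : Matrix (Fin 2) (Fin 2) ℤ) 0 1 = (A : Matrix (Fin 2) (Fin 2) ℤ) 0 1 := Lmul01 n A
    have e10 : ((L n * A : SL2) : Matrix (Fin 2) (Fin 2) ℤ) 1 0 = c1 := by rw [Lmul10]; exact hnc
    by_cases hc1z : c1 = 0
    · have hmem : (L n * A : SL2) ∈ H := tri_mem _ (by rw [e10, hc1z]) (by rw [e01]; exact hb)
      have hAeq : A = (L n)⁻¹ * (L n * A) := by group
      rw [hAeq, L_inv]
      exact mul_mem (L_mem _) hmem
    · set a' : ℤ := Int.bmod a (3 * c1).natAbs with ha'_def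
      have hdvd2 : (3 * c1) ∣ a' - a := Int.natAbs_dvd.mp Int.dvd_bmod_sub_self
      set m : ℤ := (a' - a) / (3 * c1) with hm_def
      have hma : a + m * (3 * c1) = a' := by
        have h := Int.ediv_mul_cancel hdvd2
        rw [hm_def]; linarith
      have f00 : ((T m * (L n * A) : SL2) : Matrix (Fin 2) (Fin 2) ℤ) 0 0 = a' := by
        rw [Tmul00, e00, e10]; linarith
      have hb2 : (3:ℤ) ∣ ((T m * (L n * A) : SL2) : Matrix (Fin 2) (Fin 2) ℤ) 0 1 := by
        rw [Tmul01, e01]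
        exact dvd_add hb ⟨m * ((L n * A : SL2) : Matrix (Fin 2) (Fin 2) ℤ) 1 1, by ring⟩
      have hbound : 2 * a'.natAbs ≤ (3 * c1).natAbs :=
        bmod_bound a _ (Int.natAbs_pos.mpr (by simp [hc1z]))
      have h3 : (3 * c1).natAbs = 3 * c1.natAbs := by
        rw [Int.natAbs_mul]; rfl
      have hlt : a'.natAbs < a.natAbs := by
        have h1 : 1 ≤ a.natAbs := Int.natAbs_pos.mpr ha0
        omega
      have hmem : (T m * (L n * A) : SL2) ∈ H :=
        ih a'.natAbs (lt_of_lt_of_le hlt hN) _ (le_of_eq (by rw [f00])) hb2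
      have hAeq : A = (L n)⁻¹ * ((T m)⁻¹ * (T m * (L n * A))) := by group
      rw [hAeq, L_inv, T_inv]
      exact mul_mem (L_mem _) (mul_mem (T_mem _) hmem)

def Gam : Subgroup SL2 where
  carrier := {A : SL2 | (3:ℤ) ∣ (A : Matrix (Fin 2) (Fin 2) ℤ) 0 1}
  one_mem' := by
    show (3:ℤ) ∣ ((1 : SL2) : Matrix (Fin 2) (Fin 2) ℤ) 0 1
    simp
  mul_mem' := by
    intro a b ha hb
    show (3:ℤ) ∣ ((a * b : SL2) : Matrix (Fin 2) (Fin 2) ℤ) 0 1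
    have : ((a * b : SL2) : Matrix (Fin 2) (Fin 2) ℤ) 0 1 =
        (a : Matrix (Fin 2) (Fin 2) ℤ) 0 0 * (b : Matrix (Fin 2) (Fin 2) ℤ) 0 1 +
        (a : Matrix (Fin 2) (Fin 2) ℤ) 0 1 * (b : Matrix (Fin 2) (Fin 2) ℤ) 1 1 := by
      simp [Matrix.mul_apply, Fin.sum_univ_two]
    rw [this]
    exact dvd_add (hb.mul_left _) (ha.mul_right _)
  inv_mem' := by
    intro a ha
    show (3:ℤ) ∣ ((a⁻¹ : SL2) : Matrix (Fin 2) (Fin 2) ℤ) 0 1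
    rw [Matrix.SpecialLinearGroup.SL2_inv_expl a]
    simpa using (dvd_neg.mpr ha)

end GammaUpperAux

/-- The subgroup `Γ⁰(3) = {(a b; c d) ∈ SL₂(ℤ) : b ≡ 0 (mod 3)}` is generated by
`(1 0; −1 1)` and `(2 3; −1 −1)`. -/
theorem Gamma_upper_three_generated :
    (Subgroup.closure ({g₁, g₂} : Set (Matrix.SpecialLinearGroup (Fin 2) ℤ)) : Set (Matrix.SpecialLinearGroup (Fin 2) ℤ)) =
      {A : Matrix.SpecialLinearGroup (Fin 2) ℤ | (3 : ℤ) ∣ (A : Matrix (Fin 2) (Fin 2) ℤ) 0 1} := by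
  ext A
  simp only [SetLike.mem_coe, Set.mem_setOf_eq]
  constructor
  · intro h
    have hle : Subgroup.closure ({g₁, g₂} : Set GammaUpperAux.SL2) ≤ GammaUpperAux.Gam := by
      rw [Subgroup.closure_le]
      rintro x (rfl | rfl)
      · show (3:ℤ) ∣ (g₁ : Matrix (Fin 2) (Fin 2) ℤ) 0 1
        simp [g₁]
      · show (3:ℤ) ∣ (g₂ : Matrix (Fin 2) (Fin 2) ℤ) 0 1
        simp [g₂]
    exact hle h
  · intro h
    exact GammaUpperAux.main_mem ((A : Matrix (Fin 2) (Fin 2) ℤ) 0 0).natAbs A le_rfl h
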